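/- For every natural number k ≥ 1 and natural p ≥ 0 with k ≥ p, one has 1/(k+1+p) · ((2k)!/(2^k k!)²)² < 1/(π k (k+1+p)) · exp(1/(12k)). -/

import Mathlib

open Real Stirling

lemma sqrt_pi_le_stirlingSeq (n : ℕ) (hn : 1 ≤ n) : Real.sqrt Real.pi ≤ stirlingSeq n := by
  refine le_of_tendsto tendsto_stirlingSeq_sqrt_pi ?_
  filter_upwards [Filter.eventually_ge_atTop n] with m hm
  obtain ⟨n', rfl⟩ := Nat.exists_eq_add_of_le hn
  obtain ⟨m', rfl⟩ := Nat.exists_eq_add_of_le (le_trans hn hm)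
  have h : n' ≤ m' := by omega
  simpa [Nat.add_comm] using stirlingSeq'_antitone h

lemma key_identity (k : ℕ) (hk : 1 ≤ k) :
    ((Nat.factorial (2*k) : ℝ) / ((2 : ℝ)^k * (Nat.factorial k : ℝ))^2)^2
      = (stirlingSeq (2*k))^2 / ((stirlingSeq k)^4 * k) := by
  have hkpos : (0:ℝ) < k := by exact_mod_cast hk
  have he : (0:ℝ) < Real.exp 1 := Real.exp_pos 1
  have h1 : (stirlingSeq (2*k))^2
      = ((Nat.factorial (2*k) : ℝ))^2 / ((2*(2*(k:ℝ))) * (((2*(k:ℝ))/Real.exp 1)^(2*k))^2) := by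
    unfold stirlingSeq
    rw [div_pow, mul_pow, sq_sqrt (by positivity)]
    push_cast; ring
  have h2 : (stirlingSeq k)^4
      = ((Nat.factorial k : ℝ))^4 / ((2*(k:ℝ))^2 * (((k:ℝ)/Real.exp 1)^k)^4) := by
    unfold stirlingSeq
    rw [div_pow, mul_pow]
    have h4 : (Real.sqrt (2*(k:ℝ)))^4 = ((Real.sqrt (2*(k:ℝ)))^2)^2 := by ring
    rw [h4, sq_sqrt (by positivity)]
  rw [h1, h2]
  have hf1 : ((Nat.factorial (2*k) : ℝ)) ≠ 0 := by positivity
  have hf2 : ((Nat.factorial k : ℝ)) ≠ 0 := by positivity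
  have hexp : Real.exp (2*(k:ℝ)) = Real.exp (k:ℝ) * Real.exp (k:ℝ) := by
    rw [show (2*(k:ℝ)) = (k:ℝ)+(k:ℝ) by ring, Real.exp_add]
  field_simp
  ring

/-- For `k ≥ 1` and `p ≤ k`:
`1/(k+1+p) · ((2k)!/(2^k k!)²)² < 1/(π k (k+1+p)) · exp(1/(12k))`. -/
theorem central_binomial_estimate (k p : ℕ) (hk : 1 ≤ k) (hkp : p ≤ k) :
    (1 : ℝ) / ((k : ℝ) + 1 + p) *
      ((Nat.factorial (2*k) : ℝ) / ((2 : ℝ)^k * (Nat.factorial k : ℝ))^2)^2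
    < 1 / (Real.pi * k * ((k : ℝ) + 1 + p)) * Real.exp (1 / (12*(k : ℝ))) := by
  have hkpos : (0:ℝ) < k := by exact_mod_cast hk
  set s := stirlingSeq k with hs_def
  set t := stirlingSeq (2*k) with ht_def
  have hs : Real.sqrt Real.pi ≤ s := sqrt_pi_le_stirlingSeq k hk
  have ht2 : Real.sqrt Real.pi ≤ t := sqrt_pi_le_stirlingSeq (2*k) (by omega)
  have tpos : 0 < t := lt_of_lt_of_le (Real.sqrt_pos.mpr Real.pi_pos) ht2
  have spos : 0 < s := lt_of_lt_of_le (Real.sqrt_pos.mpr Real.pi_pos) hs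
  have ht : t ≤ s := by
    obtain ⟨k', rfl⟩ := Nat.exists_eq_add_of_le hk
    have h : k' ≤ 2*(1+k') - 1 := by omega
    have := stirlingSeq'_antitone h
    simp only [Function.comp] at this
    convert this using 2
    · rfl
    · omega
    · omega
  have hπs : Real.pi ≤ s^2 := by
    have := Real.sq_sqrt Real.pi_pos.le
    nlinarith [Real.sqrt_nonneg Real.pi]
  have hC : t^2/(s^4*k) ≤ 1/(Real.pi * k) := by
    rw [div_le_div_iff₀ (by positivity) (by positivity)]
    have h1 : t^2 ≤ s^2 := by nlinarith
    have h2 : t^2 * Real.pi ≤ s^2 * s^2 := by nlinarith [Real.pi_pos]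
    nlinarith
  have hd : (0:ℝ) < (k:ℝ)+1+(p:ℝ) := by positivity
  have hexp1 : 1 < Real.exp (1/(12*(k:ℝ))) := by
    have := Real.exp_lt_exp.mpr (show (0:ℝ) < 1/(12*(k:ℝ)) by positivity)
    simpa using this
  rw [key_identity k hk]
  calc 1/((k:ℝ)+1+p) * (t^2/(s^4*k)) ≤ 1/((k:ℝ)+1+p) * (1/(Real.pi*k)) := by
        gcongr
    _ < 1/((k:ℝ)+1+p) * (1/(Real.pi*k)) * Real.exp (1/(12*(k:ℝ))) := by
        nlinarith [mul_pos (one_div_pos.mpr hd) (one_div_pos.mpr (mul_pos Real.pi_pos hkpos))]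
    _ = 1/(Real.pi*k*((k:ℝ)+1+p)) * Real.exp (1/(12*(k:ℝ))) := by
        field_simp
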